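/- arXiv:1809.08765 — 4 statements merged into one kernel-verified Lean document; each statement's English description precedes it below -/
import Mathlib

section
/- For every pair of positive integers (j,k), the number (4π/3)²·(j² + k² + jk) is a Dirichlet eigenvalue of the open equilateral triangle E with vertices (0,0), (1,0), (1/2, √3/2): there exists u : ℝ² → ℝ, twice continuously differentiable on ℝ², vanishing at every point of the boundary of E, not identically zero on E, and satisfying ∂²u/∂x² + ∂²u/∂y² = −(4π/3)²(j² + k² + jk)·u at every point of E. -/
/-- The planar Laplacian `∂²u/∂x² + ∂²u/∂y²` of `u : ℝ × ℝ → ℝ` at a point `p`. -/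
noncomputable def lap2 (u : ℝ × ℝ → ℝ) (p : ℝ × ℝ) : ℝ :=
  deriv (deriv fun x => u (x, p.2)) p.1 + deriv (deriv fun y => u (p.1, y)) p.2

/-- `lam` is a Dirichlet eigenvalue of the bounded open set `Ω ⊆ ℝ²`. -/
def IsDirichletEigenvalue (Ω : Set (ℝ × ℝ)) (lam : ℝ) : Prop :=
  ∃ u : ℝ × ℝ → ℝ,
    ContinuousOn u (closure Ω) ∧
    ContDiffOn ℝ 2 u Ω ∧
    (∀ p ∈ frontier Ω, u p = 0) ∧
    (∃ p ∈ Ω, u p ≠ 0) ∧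
    (∀ p ∈ Ω, lap2 u p = -lam * u p)

/-- The open equilateral triangle with vertices `(0,0)`, `(1,0)`, `(1/2, √3/2)`. -/
noncomputable def equilateralTriangle : Set (ℝ × ℝ) :=
  interior (convexHull ℝ {((0 : ℝ), (0 : ℝ)), ((1 : ℝ), (0 : ℝ)),
    ((1 / 2 : ℝ), (Real.sqrt 3 / 2 : ℝ))})

namespace EqTriAux

open Real

/-- x-frequencies of the six plane waves. -/
noncomputable def AA (j k : ℕ) : Fin 6 → ℝ :=
  ![ 4*π/3*((j:ℝ) + (k:ℝ)/2), 4*π/3*(-((j:ℝ)/2) - (k:ℝ)), 4*π/3*(((k:ℝ) - (j:ℝ))/2),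
     4*π/3*((j:ℝ) + (k:ℝ)/2), 4*π/3*(-((j:ℝ)/2) - (k:ℝ)), 4*π/3*(((k:ℝ) - (j:ℝ))/2) ]

/-- y-frequencies of the six plane waves. -/
noncomputable def BB (j k : ℕ) : Fin 6 → ℝ :=
  ![ 4*π/3*(Real.sqrt 3/2)*(k:ℝ), 4*π/3*(Real.sqrt 3/2)*(j:ℝ),
     4*π/3*(Real.sqrt 3/2)*(-((j:ℝ)+(k:ℝ))),
     4*π/3*(Real.sqrt 3/2)*(-(k:ℝ)), 4*π/3*(Real.sqrt 3/2)*(-(j:ℝ)),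
     4*π/3*(Real.sqrt 3/2)*((j:ℝ)+(k:ℝ)) ]

/-- signs. -/
noncomputable def cc : Fin 6 → ℝ := ![1, 1, 1, -1, -1, -1]

/-- The eigenfunction. -/
noncomputable def uu (j k : ℕ) (p : ℝ × ℝ) : ℝ :=
  ∑ i : Fin 6, cc i * Real.sin (AA j k i * p.1 + BB j k i * p.2)

@[simp] lemma AA0 (j k : ℕ) : AA j k 0 = 4*π/3*((j:ℝ) + (k:ℝ)/2) := rfl
@[simp] lemma BB0 (j k : ℕ) : BB j k 0 = 4*π/3*(Real.sqrt 3/2)*(k:ℝ) := rfl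
@[simp] lemma cc0 : cc 0 = 1 := rfl
@[simp] lemma AA1 (j k : ℕ) : AA j k 1 = 4*π/3*(-((j:ℝ)/2) - (k:ℝ)) := rfl
@[simp] lemma BB1 (j k : ℕ) : BB j k 1 = 4*π/3*(Real.sqrt 3/2)*(j:ℝ) := rfl
@[simp] lemma cc1 : cc 1 = 1 := rfl
@[simp] lemma AA2 (j k : ℕ) : AA j k 2 = 4*π/3*(((k:ℝ) - (j:ℝ))/2) := rfl
@[simp] lemma BB2 (j k : ℕ) : BB j k 2 = 4*π/3*(Real.sqrt 3/2)*(-((j:ℝ)+(k:ℝ))) := rfl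
@[simp] lemma cc2 : cc 2 = 1 := rfl
@[simp] lemma AA3 (j k : ℕ) : AA j k 3 = 4*π/3*((j:ℝ) + (k:ℝ)/2) := rfl
@[simp] lemma BB3 (j k : ℕ) : BB j k 3 = 4*π/3*(Real.sqrt 3/2)*(-(k:ℝ)) := rfl
@[simp] lemma cc3 : cc 3 = -1 := rfl
@[simp] lemma AA4 (j k : ℕ) : AA j k 4 = 4*π/3*(-((j:ℝ)/2) - (k:ℝ)) := rfl
@[simp] lemma BB4 (j k : ℕ) : BB j k 4 = 4*π/3*(Real.sqrt 3/2)*(-(j:ℝ)) := rfl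
@[simp] lemma cc4 : cc 4 = -1 := rfl
@[simp] lemma AA5 (j k : ℕ) : AA j k 5 = 4*π/3*(((k:ℝ) - (j:ℝ))/2) := rfl
@[simp] lemma BB5 (j k : ℕ) : BB j k 5 = 4*π/3*(Real.sqrt 3/2)*((j:ℝ)+(k:ℝ)) := rfl
@[simp] lemma cc5 : cc 5 = -1 := rfl

@[simp] lemma vec6_five {α : Type*} (a b c d e f : α) : ![a,b,c,d,e,f] 5 = f := rfl

lemma freq (j k : ℕ) (i : Fin 6) :
    AA j k i ^ 2 + BB j k i ^ 2 = (4*π/3)^2 * ((j:ℝ)^2 + (k:ℝ)^2 + j*k) := by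
  have h3 : Real.sqrt 3 * Real.sqrt 3 = 3 := Real.mul_self_sqrt (by norm_num)
  fin_cases i <;> simp [AA, BB] <;>
    [ linear_combination (4*π/3)^2*((k:ℝ)^2/4)*h3;
      linear_combination (4*π/3)^2*((j:ℝ)^2/4)*h3;
      linear_combination (4*π/3)^2*(((j:ℝ)+k)^2/4)*h3;
      linear_combination (4*π/3)^2*((k:ℝ)^2/4)*h3;
      linear_combination (4*π/3)^2*((j:ℝ)^2/4)*h3;
      linear_combination (4*π/3)^2*(((j:ℝ)+k)^2/4)*h3 ]

lemma hasDerivAt_inner (A C x : ℝ) : HasDerivAt (fun t : ℝ => A * t + C) A x := by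
  simpa using ((hasDerivAt_id x).const_mul A).add_const C

lemma hd1 (c A C : Fin 6 → ℝ) (x : ℝ) :
    HasDerivAt (fun t : ℝ => ∑ i : Fin 6, c i * Real.sin (A i * t + C i))
      (∑ i : Fin 6, c i * (Real.cos (A i * x + C i) * A i)) x :=
  HasDerivAt.fun_sum fun i _ => ((hasDerivAt_inner (A i) (C i) x).sin).const_mul (c i)

lemma hd2 (c A C : Fin 6 → ℝ) (x : ℝ) :
    HasDerivAt (fun t : ℝ => ∑ i : Fin 6, c i * (Real.cos (A i * t + C i) * A i))
      (∑ i : Fin 6, c i * (-Real.sin (A i * x + C i) * A i * A i)) x :=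
  HasDerivAt.fun_sum fun i _ =>
    (((hasDerivAt_inner (A i) (C i) x).cos).mul_const (A i)).const_mul (c i)

lemma deriv2_eq (c A C : Fin 6 → ℝ) (x : ℝ) :
    deriv (deriv (fun t : ℝ => ∑ i : Fin 6, c i * Real.sin (A i * t + C i))) x
      = ∑ i : Fin 6, c i * (-Real.sin (A i * x + C i) * A i * A i) := by
  have h : deriv (fun t : ℝ => ∑ i : Fin 6, c i * Real.sin (A i * t + C i))
      = fun t => ∑ i : Fin 6, c i * (Real.cos (A i * t + C i) * A i) :=
    funext fun t => (hd1 c A C t).deriv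
  rw [h, (hd2 c A C x).deriv]

lemma lap2_uu (j k : ℕ) (p : ℝ × ℝ) :
    lap2 (uu j k) p
      = -((4 * Real.pi / 3) ^ 2 * ((j : ℝ) ^ 2 + (k : ℝ) ^ 2 + j * k)) * uu j k p := by
  have hx : (fun x => uu j k (x, p.2))
      = fun t => ∑ i : Fin 6, cc i * Real.sin (AA j k i * t + BB j k i * p.2) := rfl
  have hy : (fun y => uu j k (p.1, y))
      = fun t => ∑ i : Fin 6, cc i * Real.sin (BB j k i * t + AA j k i * p.1) := by
    funext t
    exact Finset.sum_congr rfl fun i _ => by rw [add_comm (AA j k i * p.1)]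
  rw [lap2, hx, hy, deriv2_eq, deriv2_eq, uu, Finset.mul_sum, ← Finset.sum_add_distrib]
  refine Finset.sum_congr rfl fun i _ => ?_
  rw [add_comm (BB j k i * p.2)]
  linear_combination (-(cc i) * Real.sin (AA j k i * p.1 + BB j k i * p.2)) * freq j k i


lemma uu_contDiff (j k : ℕ) : ContDiff ℝ 2 (uu j k) := by
  unfold uu
  refine ContDiff.sum fun i _ => ContDiff.mul contDiff_const ?_
  exact Real.contDiff_sin.comp
    ((contDiff_const.mul contDiff_fst).add (contDiff_const.mul contDiff_snd))

lemma uu_zero_y0 (j k : ℕ) (x : ℝ) : uu j k (x, 0) = 0 := by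
  simp only [uu, Fin.sum_univ_six, AA0, AA1, AA2, AA3, AA4, AA5, BB0, BB1, BB2, BB3, BB4, BB5,
    cc0, cc1, cc2, cc3, cc4, cc5, mul_zero, add_zero]
  ring

lemma uu_zero_l2 (j k : ℕ) (x : ℝ) : uu j k (x, Real.sqrt 3 * x) = 0 := by
  have h3 : Real.sqrt 3 * Real.sqrt 3 = 3 := Real.mul_self_sqrt (by norm_num)
  have e0 : AA j k 0 * x + BB j k 0 * (Real.sqrt 3 * x) = 4*π/3*((j:ℝ)+2*(k:ℝ))*x := by
    simp only [AA0, BB0]; linear_combination 4*π/3*((k:ℝ)/2)*x*h3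
  have e1 : AA j k 1 * x + BB j k 1 * (Real.sqrt 3 * x) = 4*π/3*((j:ℝ)-(k:ℝ))*x := by
    simp only [AA1, BB1]; linear_combination 4*π/3*((j:ℝ)/2)*x*h3
  have e2 : AA j k 2 * x + BB j k 2 * (Real.sqrt 3 * x) = 4*π/3*(-(2*(j:ℝ))-(k:ℝ))*x := by
    simp only [AA2, BB2]; linear_combination 4*π/3*(-((j:ℝ)+(k:ℝ))/2)*x*h3
  have e3 : AA j k 3 * x + BB j k 3 * (Real.sqrt 3 * x) = 4*π/3*((j:ℝ)-(k:ℝ))*x := by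
    simp only [AA3, BB3]; linear_combination 4*π/3*(-((k:ℝ))/2)*x*h3
  have e4 : AA j k 4 * x + BB j k 4 * (Real.sqrt 3 * x) = 4*π/3*(-(2*(j:ℝ))-(k:ℝ))*x := by
    simp only [AA4, BB4]; linear_combination 4*π/3*(-((j:ℝ))/2)*x*h3
  have e5 : AA j k 5 * x + BB j k 5 * (Real.sqrt 3 * x) = 4*π/3*((j:ℝ)+2*(k:ℝ))*x := by
    simp only [AA5, BB5]; linear_combination 4*π/3*(((j:ℝ)+(k:ℝ))/2)*x*h3
  simp only [uu, Fin.sum_univ_six]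
  rw [e0, e1, e2, e3, e4, e5, cc0, cc1, cc2, cc3, cc4, cc5]
  ring

lemma uu_zero_l3 (j k : ℕ) (x : ℝ) :
    uu j k (x, Real.sqrt 3 - Real.sqrt 3 * x) = 0 := by
  have h3 : Real.sqrt 3 * Real.sqrt 3 = 3 := Real.mul_self_sqrt (by norm_num)
  have e0 : AA j k 0 * x + BB j k 0 * (Real.sqrt 3 - Real.sqrt 3 * x)
      = 4*π/3*((j:ℝ)-(k:ℝ))*x + ((k:ℤ):ℝ)*(2*π) := by
    simp only [AA0, BB0]; push_cast
    linear_combination 4*π/3*((k:ℝ)/2)*(1-x)*h3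
  have e1 : AA j k 1 * x + BB j k 1 * (Real.sqrt 3 - Real.sqrt 3 * x)
      = 4*π/3*(-(2*(j:ℝ))-(k:ℝ))*x + ((j:ℤ):ℝ)*(2*π) := by
    simp only [AA1, BB1]; push_cast
    linear_combination 4*π/3*((j:ℝ)/2)*(1-x)*h3
  have e2 : AA j k 2 * x + BB j k 2 * (Real.sqrt 3 - Real.sqrt 3 * x)
      = 4*π/3*((j:ℝ)+2*(k:ℝ))*x + ((-(j:ℤ)-(k:ℤ) : ℤ):ℝ)*(2*π) := by
    simp only [AA2, BB2]; push_cast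
    linear_combination 4*π/3*(-((j:ℝ)+(k:ℝ))/2)*(1-x)*h3
  have e3 : AA j k 3 * x + BB j k 3 * (Real.sqrt 3 - Real.sqrt 3 * x)
      = 4*π/3*((j:ℝ)+2*(k:ℝ))*x + ((-(k:ℤ) : ℤ):ℝ)*(2*π) := by
    simp only [AA3, BB3]; push_cast
    linear_combination 4*π/3*(-((k:ℝ))/2)*(1-x)*h3
  have e4 : AA j k 4 * x + BB j k 4 * (Real.sqrt 3 - Real.sqrt 3 * x)
      = 4*π/3*((j:ℝ)-(k:ℝ))*x + ((-(j:ℤ) : ℤ):ℝ)*(2*π) := by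
    simp only [AA4, BB4]; push_cast
    linear_combination 4*π/3*(-((j:ℝ))/2)*(1-x)*h3
  have e5 : AA j k 5 * x + BB j k 5 * (Real.sqrt 3 - Real.sqrt 3 * x)
      = 4*π/3*(-(2*(j:ℝ))-(k:ℝ))*x + (((j:ℤ)+(k:ℤ) : ℤ):ℝ)*(2*π) := by
    simp only [AA5, BB5]; push_cast
    linear_combination 4*π/3*(((j:ℝ)+(k:ℝ))/2)*(1-x)*h3
  simp only [uu, Fin.sum_univ_six]
  rw [e0, e1, e2, e3, e4, e5,
      Real.sin_add_int_mul_two_pi _ (k:ℤ), Real.sin_add_int_mul_two_pi _ (j:ℤ),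
      Real.sin_add_int_mul_two_pi _ (-(j:ℤ)-(k:ℤ)), Real.sin_add_int_mul_two_pi _ (-(k:ℤ)),
      Real.sin_add_int_mul_two_pi _ (-(j:ℤ)), Real.sin_add_int_mul_two_pi _ ((j:ℤ)+(k:ℤ)),
      cc0, cc1, cc2, cc3, cc4, cc5]
  ring

noncomputable def Tset : Set (ℝ × ℝ) :=
  convexHull ℝ {((0 : ℝ), (0 : ℝ)), ((1 : ℝ), (0 : ℝ)), ((1 / 2 : ℝ), (Real.sqrt 3 / 2 : ℝ))}

lemma eqTri_eq : equilateralTriangle = interior Tset := rfl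

lemma Tsub : Tset ⊆
    {p : ℝ × ℝ | 0 ≤ p.2 ∧ p.2 ≤ Real.sqrt 3 * p.1 ∧ Real.sqrt 3 * p.1 + p.2 ≤ Real.sqrt 3} := by
  have s3 : (0:ℝ) ≤ Real.sqrt 3 := Real.sqrt_nonneg 3
  apply convexHull_min
  · rintro p (rfl | rfl | rfl) <;> refine ⟨?_, ?_, ?_⟩ <;> simp <;> linarith
  · rintro p hp q hq a b ha hb hab
    simp only [Set.mem_setOf_eq] at hp hq ⊢
    obtain ⟨h1, h2, h3⟩ := hp
    obtain ⟨g1, g2, g3⟩ := hq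
    have e1 : (a • p + b • q).1 = a * p.1 + b * q.1 := rfl
    have e2 : (a • p + b • q).2 = a * p.2 + b * q.2 := rfl
    refine ⟨by rw [e2]; nlinarith, by rw [e1, e2]; nlinarith, by rw [e1, e2]; nlinarith⟩

lemma Hsub :
    {p : ℝ × ℝ | 0 ≤ p.2 ∧ p.2 ≤ Real.sqrt 3 * p.1 ∧ Real.sqrt 3 * p.1 + p.2 ≤ Real.sqrt 3}
      ⊆ Tset := by
  rintro ⟨x, y⟩ ⟨h1, h2, h3⟩
  have hs3 : (0:ℝ) < Real.sqrt 3 := Real.sqrt_pos.mpr (by norm_num)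
  have hm : Real.sqrt 3 * Real.sqrt 3 = 3 := Real.mul_self_sqrt (by norm_num)
  have hw0 : ∀ i ∈ (Finset.univ : Finset (Fin 3)), 0 ≤
      (![Real.sqrt 3 - Real.sqrt 3 * x - y, Real.sqrt 3 * x - y, 2 * y] : Fin 3 → ℝ) i := by
    intro i _; fin_cases i <;> simp <;> linarith
  have hsum : 0 < ∑ i : Fin 3,
      (![Real.sqrt 3 - Real.sqrt 3 * x - y, Real.sqrt 3 * x - y, 2 * y] : Fin 3 → ℝ) i := by
    rw [Fin.sum_univ_three]; simp; linarith
  have hzmem : ∀ i ∈ (Finset.univ : Finset (Fin 3)),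
      (![((0:ℝ),(0:ℝ)), ((1:ℝ),(0:ℝ)), ((1/2:ℝ), (Real.sqrt 3/2:ℝ))] : Fin 3 → ℝ × ℝ) i ∈
      ({((0:ℝ),(0:ℝ)), ((1:ℝ),(0:ℝ)), ((1/2:ℝ), (Real.sqrt 3/2:ℝ))} : Set (ℝ × ℝ)) := by
    intro i _; fin_cases i <;> simp
  have hmem := Finset.centerMass_mem_convexHull Finset.univ hw0 hsum hzmem
  have hcm : Finset.univ.centerMass
      (![Real.sqrt 3 - Real.sqrt 3 * x - y, Real.sqrt 3 * x - y, 2 * y] : Fin 3 → ℝ)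
      (![((0:ℝ),(0:ℝ)), ((1:ℝ),(0:ℝ)), ((1/2:ℝ), (Real.sqrt 3/2:ℝ))] : Fin 3 → ℝ × ℝ)
      = ((x, y) : ℝ × ℝ) := by
    rw [Finset.centerMass, Fin.sum_univ_three, Fin.sum_univ_three]
    simp only [Matrix.cons_val_zero, Matrix.cons_val_one, Matrix.head_cons,
      Matrix.cons_val_two, Matrix.tail_cons, Prod.smul_mk, smul_eq_mul, Prod.mk_add_mk]
    rw [Prod.mk.injEq]
    constructor
    · rw [show Real.sqrt 3 - Real.sqrt 3 * x - y + (Real.sqrt 3 * x - y) + 2 * y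
          = Real.sqrt 3 by ring, inv_mul_eq_div, div_eq_iff hs3.ne']
      ring
    · rw [show Real.sqrt 3 - Real.sqrt 3 * x - y + (Real.sqrt 3 * x - y) + 2 * y
          = Real.sqrt 3 by ring, inv_mul_eq_div, div_eq_iff hs3.ne']
      ring
  rw [hcm] at hmem
  exact hmem

lemma strictSub :
    {p : ℝ × ℝ | 0 < p.2 ∧ p.2 < Real.sqrt 3 * p.1 ∧ Real.sqrt 3 * p.1 + p.2 < Real.sqrt 3}
      ⊆ equilateralTriangle := by
  rw [eqTri_eq]
  apply interior_maximal
  · exact fun p hp => Hsub ⟨hp.1.le, hp.2.1.le, hp.2.2.le⟩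
  · have h1 : IsOpen {p : ℝ × ℝ | 0 < p.2} := isOpen_lt continuous_const continuous_snd
    have h2 : IsOpen {p : ℝ × ℝ | p.2 < Real.sqrt 3 * p.1} :=
      isOpen_lt continuous_snd (continuous_const.mul continuous_fst)
    have h3 : IsOpen {p : ℝ × ℝ | Real.sqrt 3 * p.1 + p.2 < Real.sqrt 3} :=
      isOpen_lt ((continuous_const.mul continuous_fst).add continuous_snd) continuous_const
    exact (h1.inter (h2.inter h3))

lemma frontier_sub : frontier equilateralTriangle ⊆
    {p : ℝ × ℝ | p.2 = 0 ∨ p.2 = Real.sqrt 3 * p.1 ∨ Real.sqrt 3 * p.1 + p.2 = Real.sqrt 3} := by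
  intro p hp
  have hT : IsClosed Tset := (Set.Finite.isCompact_convexHull (𝕜 := ℝ) (Set.toFinite _)).isClosed
  have hpT : p ∈ Tset := by
    have h2 : closure equilateralTriangle ⊆ closure Tset := by
      rw [eqTri_eq]; exact closure_mono interior_subset
    rw [hT.closure_eq] at h2
    exact h2 (frontier_subset_closure hp)
  have hpnE : p ∉ equilateralTriangle := by
    rw [eqTri_eq] at hp ⊢
    rw [IsOpen.frontier_eq isOpen_interior] at hp
    exact hp.2
  have hle := Tsub hpT
  by_contra hc
  simp only [Set.mem_setOf_eq] at hc
  push_neg at hc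
  exact hpnE (strictSub ⟨lt_of_le_of_ne hle.1 (Ne.symm hc.1),
    lt_of_le_of_ne hle.2.1 hc.2.1, lt_of_le_of_ne hle.2.2 hc.2.2⟩)

lemma uu_frontier (j k : ℕ) (p : ℝ × ℝ) (hp : p ∈ frontier equilateralTriangle) :
    uu j k p = 0 := by
  obtain ⟨x, y⟩ := p
  rcases frontier_sub hp with h | h | h
  · simp only at h; rw [h]; exact uu_zero_y0 j k x
  · simp only at h; rw [h]; exact uu_zero_l2 j k x
  · simp only at h
    have : y = Real.sqrt 3 - Real.sqrt 3 * x := by linarith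
    rw [this]; exact uu_zero_l3 j k x

lemma pstar_mem (j k : ℕ) (hj : 0 < j) (hk : 0 < k) :
    ((3 * ((j:ℝ)+(k:ℝ))⁻¹ / 4, Real.sqrt 3 * ((j:ℝ)+(k:ℝ))⁻¹ / 4) : ℝ × ℝ)
      ∈ equilateralTriangle := by
  have hs3 : (0:ℝ) < Real.sqrt 3 := Real.sqrt_pos.mpr (by norm_num)
  have hj1 : (1:ℝ) ≤ (j:ℝ) := by exact_mod_cast hj
  have hk1 : (1:ℝ) ≤ (k:ℝ) := by exact_mod_cast hk
  have hN : (0:ℝ) < (j:ℝ)+(k:ℝ) := by linarith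
  have ht : (0:ℝ) < ((j:ℝ)+(k:ℝ))⁻¹ := inv_pos.mpr hN
  have ht2 : ((j:ℝ)+(k:ℝ))⁻¹ ≤ 2⁻¹ := by
    apply inv_anti₀ (by norm_num) (by linarith)
  apply strictSub
  refine ⟨by positivity, ?_, ?_⟩
  · have : Real.sqrt 3 * (3 * ((j:ℝ)+(k:ℝ))⁻¹ / 4)
        = 3 * (Real.sqrt 3 * ((j:ℝ)+(k:ℝ))⁻¹ / 4) := by ring
    rw [this]
    have h0 : 0 < Real.sqrt 3 * ((j:ℝ)+(k:ℝ))⁻¹ / 4 := by positivity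
    linarith
  · have key : Real.sqrt 3 * ((j:ℝ)+(k:ℝ))⁻¹ ≤ Real.sqrt 3 * 2⁻¹ :=
      mul_le_mul_of_nonneg_left ht2 hs3.le
    nlinarith

lemma uu_pstar (j k : ℕ) (hj : 0 < j) (hk : 0 < k) :
    uu j k ((3 * ((j:ℝ)+(k:ℝ))⁻¹ / 4, Real.sqrt 3 * ((j:ℝ)+(k:ℝ))⁻¹ / 4) : ℝ × ℝ) < 0 := by
  have h3 : Real.sqrt 3 * Real.sqrt 3 = 3 := Real.mul_self_sqrt (by norm_num)
  have hj1 : (1:ℝ) ≤ (j:ℝ) := by exact_mod_cast hj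
  have hk1 : (1:ℝ) ≤ (k:ℝ) := by exact_mod_cast hk
  have hN : (0:ℝ) < (j:ℝ)+(k:ℝ) := by linarith
  set t : ℝ := ((j:ℝ)+(k:ℝ))⁻¹ with htdef
  have htpos : 0 < t := inv_pos.mpr hN
  have ht : ((j:ℝ)+(k:ℝ)) * t = 1 := mul_inv_cancel₀ (ne_of_gt hN)
  have e0 : AA j k 0 * (3 * t / 4) + BB j k 0 * (Real.sqrt 3 * t / 4) = π := by
    simp only [AA0, BB0]
    linear_combination (4*π/3)*(k:ℝ)*t/8*h3 + π*ht
  have e1 : AA j k 1 * (3 * t / 4) + BB j k 1 * (Real.sqrt 3 * t / 4) = -((k:ℝ)*π*t) := by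
    simp only [AA1, BB1]
    linear_combination (4*π/3)*(j:ℝ)*t/8*h3
  have e2 : AA j k 2 * (3 * t / 4) + BB j k 2 * (Real.sqrt 3 * t / 4) = -((j:ℝ)*π*t) := by
    simp only [AA2, BB2]
    linear_combination (4*π/3)*(-((j:ℝ)+(k:ℝ)))*t/8*h3
  have e3 : AA j k 3 * (3 * t / 4) + BB j k 3 * (Real.sqrt 3 * t / 4) = (j:ℝ)*π*t := by
    simp only [AA3, BB3]
    linear_combination (4*π/3)*(-(k:ℝ))*t/8*h3
  have e4 : AA j k 4 * (3 * t / 4) + BB j k 4 * (Real.sqrt 3 * t / 4) = -π := by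
    simp only [AA4, BB4]
    linear_combination (4*π/3)*(-(j:ℝ))*t/8*h3 + (-π)*ht
  have e5 : AA j k 5 * (3 * t / 4) + BB j k 5 * (Real.sqrt 3 * t / 4) = (k:ℝ)*π*t := by
    simp only [AA5, BB5]
    linear_combination (4*π/3)*((j:ℝ)+(k:ℝ))*t/8*h3
  have hjt : (j:ℝ) * t < 1 := by nlinarith
  have hkt : (k:ℝ) * t < 1 := by nlinarith
  have s1 : 0 < Real.sin ((j:ℝ)*π*t) := by
    apply Real.sin_pos_of_pos_of_lt_pi
    · positivity
    · nlinarith [Real.pi_pos]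
  have s2 : 0 < Real.sin ((k:ℝ)*π*t) := by
    apply Real.sin_pos_of_pos_of_lt_pi
    · positivity
    · nlinarith [Real.pi_pos]
  have hval : uu j k ((3 * t / 4, Real.sqrt 3 * t / 4) : ℝ × ℝ)
      = -2 * Real.sin ((j:ℝ)*π*t) - 2 * Real.sin ((k:ℝ)*π*t) := by
    simp only [uu, Fin.sum_univ_six]
    rw [e0, e1, e2, e3, e4, e5, cc0, cc1, cc2, cc3, cc4, cc5,
        Real.sin_pi, Real.sin_neg, Real.sin_neg, Real.sin_neg, Real.sin_pi]
    ring
  have : (3 * t / 4, Real.sqrt 3 * t / 4) = ((3 * t / 4, Real.sqrt 3 * t / 4) : ℝ × ℝ) := rfl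
  calc uu j k ((3 * t / 4, Real.sqrt 3 * t / 4) : ℝ × ℝ)
      = -2 * Real.sin ((j:ℝ)*π*t) - 2 * Real.sin ((k:ℝ)*π*t) := hval
    _ < 0 := by linarith

end EqTriAux

theorem stmt2 (j k : ℕ) (hj : 0 < j) (hk : 0 < k) :
    (∃ u : ℝ × ℝ → ℝ,
      ContDiff ℝ 2 u ∧
      (∀ p ∈ frontier equilateralTriangle, u p = 0) ∧
      (∃ p ∈ equilateralTriangle, u p ≠ 0) ∧
      (∀ p ∈ equilateralTriangle,
        lap2 u p = -((4 * Real.pi / 3) ^ 2 * ((j : ℝ) ^ 2 + (k : ℝ) ^ 2 + j * k)) * u p)) ∧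
    IsDirichletEigenvalue equilateralTriangle
      ((4 * Real.pi / 3) ^ 2 * ((j : ℝ) ^ 2 + (k : ℝ) ^ 2 + j * k)) := by
  have hcd := EqTriAux.uu_contDiff j k
  have hfr := fun p hp => EqTriAux.uu_frontier j k p hp
  have hpt : ∃ p ∈ equilateralTriangle, EqTriAux.uu j k p ≠ 0 :=
    ⟨_, EqTriAux.pstar_mem j k hj hk, ne_of_lt (EqTriAux.uu_pstar j k hj hk)⟩
  have hlap := fun (p : ℝ × ℝ) => EqTriAux.lap2_uu j k p
  exact ⟨⟨EqTriAux.uu j k, hcd, hfr, hpt, fun p _ => hlap p⟩,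
    ⟨EqTriAux.uu j k, hcd.continuous.continuousOn, hcd.contDiffOn, hfr, hpt,
      fun p _ => hlap p⟩⟩
end

section
/- The hyperbolic area of the hyperbolic disc of radius R > 0 equals 4π·sinh²(R/2): the integral of the function (x,y) ↦ 1/y² over the Euclidean disc D = {(x,y) ∈ ℝ² : x² + (y − cosh R)² ≤ sinh² R} (which is the hyperbolic disc of radius R about the point (0,1) in the upper half-plane model) equals 2π(cosh R − 1) = 4π·sinh²(R/2). -/
open MeasureTheory

lemma inner_int (c s : ℝ) (hs : 0 ≤ s) (h : 0 < c - s) :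
    (∫ y in Set.Icc (c - s) (c + s), 1 / y ^ 2) = 1 / (c - s) - 1 / (c + s) := by
  have hle : c - s ≤ c + s := by linarith
  rw [integral_Icc_eq_integral_Ioc, ← intervalIntegral.integral_of_le hle]
  have hderiv : ∀ y ∈ Set.uIcc (c - s) (c + s),
      HasDerivAt (fun y : ℝ => -y⁻¹) (1 / y ^ 2) y := by
    intro y hy
    rw [Set.uIcc_of_le hle] at hy
    have hy0 : y ≠ 0 := by
      have := hy.1; intro hy0; rw [hy0] at this; linarith
    simpa [one_div] using (hasDerivAt_inv hy0).fun_neg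
  have hint : IntervalIntegrable (fun y : ℝ => 1 / y ^ 2) volume (c - s) (c + s) := by
    apply ContinuousOn.intervalIntegrable
    apply ContinuousOn.div continuousOn_const (by fun_prop)
    intro y hy
    rw [Set.uIcc_of_le hle] at hy
    have : (0:ℝ) < y := lt_of_lt_of_le h hy.1
    positivity
  rw [intervalIntegral.integral_eq_sub_of_hasDerivAt hderiv hint]
  have h2 : (0:ℝ) < c + s := by linarith
  field_simp
  ring

open Real in
set_option maxHeartbeats 2000000 in
lemma outer_int (r a : ℝ) (hr : 0 < r) (ha : 0 < a) (h2 : a ^ 2 = 1 + r ^ 2) :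
    (∫ x in (-r)..r, 2 * Real.sqrt (r ^ 2 - x ^ 2) / (1 + x ^ 2))
      = 2 * Real.pi * (a - 1) := by
  set F : ℝ → ℝ := fun x =>
    2 * (a * arcsin (a * x / (r * Real.sqrt (1 + x ^ 2))) - arcsin (x / r)) with hF
  have hsq : Real.sqrt (1 + r ^ 2) = a := by rw [← h2, Real.sqrt_sq ha.le]
  have hTc : Continuous fun x : ℝ => Real.sqrt (1 + x ^ 2) := by fun_prop
  have hvc : Continuous fun x : ℝ => a * x / (r * Real.sqrt (1 + x ^ 2)) := by
    apply Continuous.div (by fun_prop) (by fun_prop)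
    intro x
    have : 0 < Real.sqrt (1 + x ^ 2) := Real.sqrt_pos.mpr (by positivity)
    positivity
  have hFc : Continuous F := by
    apply Continuous.mul continuous_const
    exact (continuous_const.mul (continuous_arcsin.comp hvc)).sub
      (continuous_arcsin.comp (continuous_id.div_const r))
  have hgc : Continuous fun x : ℝ => 2 * Real.sqrt (r ^ 2 - x ^ 2) / (1 + x ^ 2) := by
    apply Continuous.div (by fun_prop) (by fun_prop)
    intro x; positivity
  have hderiv : ∀ x ∈ Set.Ioo (-r) r,
      HasDerivWithinAt F (2 * Real.sqrt (r ^ 2 - x ^ 2) / (1 + x ^ 2)) (Set.Ioi x) x := by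
    intro x hx
    have hx2 : x ^ 2 < r ^ 2 := by
      rcases hx with ⟨h1, h3⟩
      nlinarith
    set T := Real.sqrt (1 + x ^ 2) with hTdef
    set S := Real.sqrt (r ^ 2 - x ^ 2) with hSdef
    have hT2 : T ^ 2 = 1 + x ^ 2 := Real.sq_sqrt (by positivity)
    have hT0 : 0 < T := Real.sqrt_pos.mpr (by positivity)
    have hS2 : S ^ 2 = r ^ 2 - x ^ 2 := Real.sq_sqrt (by linarith)
    have hS0 : 0 < S := Real.sqrt_pos.mpr (by linarith)
    -- derivative of sqrt(1+x^2)
    have hTd : HasDerivAt (fun x : ℝ => Real.sqrt (1 + x ^ 2)) (x / T) x := by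
      have hin : HasDerivAt (fun x : ℝ => 1 + x ^ 2) (2 * x) x := by
        simpa using ((hasDerivAt_pow 2 x).const_add 1)
      have := (Real.hasDerivAt_sqrt (by positivity : (1:ℝ) + x ^ 2 ≠ 0)).comp x hin
      refine this.congr_deriv ?_
      rw [← hTdef]
      field_simp
    -- derivative of v
    have hvd : HasDerivAt (fun x : ℝ => a * x / (r * Real.sqrt (1 + x ^ 2)))
        ((a * (r * T) - a * x * (r * (x / T))) / (r * T) ^ 2) x := by
      have h := ((hasDerivAt_id x).const_mul a).div (hTd.const_mul r)
        (by positivity)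
      refine h.congr_deriv ?_
      simp [← hTdef]
    have hv2 : (a * x / (r * T)) ^ 2 < 1 := by
      rw [div_pow, div_lt_one (by positivity)]
      rw [mul_pow, mul_pow, hT2]
      nlinarith
    have hvabs := abs_lt.mp ((sq_lt_one_iff_abs_lt_one _).mp hv2)
    have harc1 : HasDerivAt (fun x : ℝ => arcsin (a * x / (r * Real.sqrt (1 + x ^ 2))))
        (1 / Real.sqrt (1 - (a * x / (r * T)) ^ 2) *
          ((a * (r * T) - a * x * (r * (x / T))) / (r * T) ^ 2)) x := by
      exact (Real.hasDerivAt_arcsin hvabs.1.ne' hvabs.2.ne).comp x hvd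
    have hx2' : (x / r) ^ 2 < 1 := by
      rw [div_pow, div_lt_one (by positivity)]; linarith
    have hxabs := abs_lt.mp ((sq_lt_one_iff_abs_lt_one _).mp hx2')
    have harc2 : HasDerivAt (fun x : ℝ => arcsin (x / r))
        (1 / Real.sqrt (1 - (x / r) ^ 2) * (1 / r)) x := by
      exact (Real.hasDerivAt_arcsin hxabs.1.ne' hxabs.2.ne).comp x
        ((hasDerivAt_id' x).div_const r)
    have hFd : HasDerivAt F
        (2 * (a * (1 / Real.sqrt (1 - (a * x / (r * T)) ^ 2) *
          ((a * (r * T) - a * x * (r * (x / T))) / (r * T) ^ 2)) -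
          1 / Real.sqrt (1 - (x / r) ^ 2) * (1 / r))) x :=
      ((harc1.const_mul a).sub harc2).const_mul 2
    -- simplify the sqrt terms
    have e1 : Real.sqrt (1 - (a * x / (r * T)) ^ 2) = S / (r * T) := by
      have : 1 - (a * x / (r * T)) ^ 2 = (S / (r * T)) ^ 2 := by
        field_simp
        nlinarith [hS2, hT2, h2]
      rw [this, Real.sqrt_sq (by positivity)]
    have e2 : Real.sqrt (1 - (x / r) ^ 2) = S / r := by
      have : 1 - (x / r) ^ 2 = (S / r) ^ 2 := by
        field_simp
        nlinarith [hS2]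
      rw [this, Real.sqrt_sq (by positivity)]
    rw [e1, e2] at hFd
    have : (2 * (a * (1 / (S / (r * T)) *
          ((a * (r * T) - a * x * (r * (x / T))) / (r * T) ^ 2)) -
          1 / (S / r) * (1 / r))) = 2 * S / (1 + x ^ 2) := by
      field_simp
      linear_combination ((a^2-1)*(1+x^2) - S^2) * hT2 + (1+x^2) * h2 - (1+x^2) * hS2
    rw [this] at hFd
    exact hFd.hasDerivWithinAt
  have key := intervalIntegral.integral_eq_sub_of_hasDeriv_right_of_le (by linarith : -r ≤ r)
    hFc.continuousOn hderiv (hgc.intervalIntegrable _ _)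
  rw [key]
  have hr' : r ≠ 0 := hr.ne'
  have hFr : F r = 2 * (a * (Real.pi / 2) - Real.pi / 2) := by
    simp only [hF]
    rw [hsq, show a * r / (r * a) = 1 from by field_simp,
      div_self hr', Real.arcsin_one]
  have hFnr : F (-r) = 2 * (a * (-(Real.pi / 2)) + Real.pi / 2) := by
    simp only [hF]
    rw [show (1 + (-r) ^ 2 : ℝ) = 1 + r ^ 2 from by ring, hsq,
      show a * -r / (r * a) = -1 from by field_simp,
      show (-r) / r = -1 from by field_simp, Real.arcsin_neg_one]
    ring
  rw [hFr, hFnr]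
  ring

set_option maxHeartbeats 1000000 in
theorem stmt8 (R : ℝ) (hR : 0 < R) :
    (∫ p in {q : ℝ × ℝ | q.1 ^ 2 + (q.2 - Real.cosh R) ^ 2 ≤ Real.sinh R ^ 2},
        1 / p.2 ^ 2) = 2 * Real.pi * (Real.cosh R - 1) ∧
    2 * Real.pi * (Real.cosh R - 1) = 4 * Real.pi * Real.sinh (R / 2) ^ 2 := by
  have hsecond : 2 * Real.pi * (Real.cosh R - 1)
      = 4 * Real.pi * Real.sinh (R / 2) ^ 2 := by
    have h1 : Real.cosh (2 * (R / 2))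
        = Real.cosh (R / 2) ^ 2 + Real.sinh (R / 2) ^ 2 := Real.cosh_two_mul (R / 2)
    have h2 : Real.cosh (R / 2) ^ 2 = Real.sinh (R / 2) ^ 2 + 1 := Real.cosh_sq (R / 2)
    have h3 : Real.cosh R = 2 * Real.sinh (R / 2) ^ 2 + 1 := by
      rw [show R = 2 * (R / 2) from by ring, h1, h2]; ring_nf
    rw [h3]; ring
  refine ⟨?_, hsecond⟩
  set a := Real.cosh R with hadef
  set r := Real.sinh R with hrdef
  have hr : 0 < r := Real.sinh_pos_iff.mpr hR
  have ha : 0 < a := by rw [hadef]; exact Real.cosh_pos R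
  have ha2 : a ^ 2 = 1 + r ^ 2 := Real.cosh_sq' R
  have har : r < a := by nlinarith
  set D := {q : ℝ × ℝ | q.1 ^ 2 + (q.2 - a) ^ 2 ≤ r ^ 2} with hDdef
  have hDclosed : IsClosed D := isClosed_le (by fun_prop) continuous_const
  have hDm : MeasurableSet D := hDclosed.measurableSet
  have hsub : D ⊆ Set.Icc (-r) r ×ˢ Set.Icc (a - r) (a + r) := by
    rintro ⟨x, y⟩ hq
    simp only [hDdef, Set.mem_setOf_eq] at hq
    refine ⟨⟨by nlinarith [sq_nonneg (y - a)], by nlinarith [sq_nonneg (y - a)]⟩,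
      ⟨by nlinarith [sq_nonneg x], by nlinarith [sq_nonneg x]⟩⟩
  have hDcomp : IsCompact D :=
    (isCompact_Icc.prod isCompact_Icc).of_isClosed_subset hDclosed hsub
  have hpos : ∀ q ∈ D, 0 < q.2 := by
    rintro ⟨x, y⟩ hq
    simp only [hDdef, Set.mem_setOf_eq] at hq
    have : a - r ≤ y := by nlinarith [sq_nonneg x]
    simp only []
    linarith
  have hIntOn : IntegrableOn (fun p : ℝ × ℝ => 1 / p.2 ^ 2) D volume := by
    apply ContinuousOn.integrableOn_compact hDcomp
    apply ContinuousOn.div continuousOn_const (by fun_prop)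
    intro q hq
    have := hpos q hq
    positivity
  have hf : Integrable (Set.indicator D (fun p : ℝ × ℝ => 1 / p.2 ^ 2))
      (volume.prod volume) := by
    rw [← Measure.volume_eq_prod]
    exact (integrable_indicator_iff hDm).mpr hIntOn
  rw [← integral_indicator hDm, Measure.volume_eq_prod, integral_prod _ hf]
  have hx_eq : ∀ x : ℝ,
      (∫ y, Set.indicator D (fun p : ℝ × ℝ => 1 / p.2 ^ 2) (x, y)) =
      Set.indicator (Set.Icc (-r) r)
        (fun x => 2 * Real.sqrt (r ^ 2 - x ^ 2) / (1 + x ^ 2)) x := by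
    intro x
    by_cases hxr : x ∈ Set.Icc (-r) r
    · obtain ⟨hx1, hx2⟩ := hxr
      have hxsq : x ^ 2 ≤ r ^ 2 := by nlinarith
      set s := Real.sqrt (r ^ 2 - x ^ 2) with hsdef
      have hs0 : 0 ≤ s := Real.sqrt_nonneg _
      have hs2 : s ^ 2 = r ^ 2 - x ^ 2 := Real.sq_sqrt (by linarith)
      have hsr : s ≤ r := by nlinarith
      have hcs : 0 < a - s := by linarith
      have hfun : (fun y => Set.indicator D (fun p : ℝ × ℝ => 1 / p.2 ^ 2) (x, y))
          = Set.indicator (Set.Icc (a - s) (a + s)) (fun y => 1 / y ^ 2) := by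
        funext y
        by_cases hy : y ∈ Set.Icc (a - s) (a + s)
        · obtain ⟨hy1, hy2⟩ := hy
          have hmemD : (x, y) ∈ D := by
            simp only [hDdef, Set.mem_setOf_eq]
            nlinarith
          rw [Set.indicator_of_mem hmemD, Set.indicator_of_mem (Set.mem_Icc.mpr ⟨hy1, hy2⟩)]
        · rw [Set.indicator_of_notMem hy, Set.indicator_of_notMem]
          intro hmem
          simp only [hDdef, Set.mem_setOf_eq] at hmem
          exact hy (Set.mem_Icc.mpr ⟨by nlinarith, by nlinarith⟩)
      rw [hfun, integral_indicator measurableSet_Icc, inner_int a s hs0 hcs,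
        Set.indicator_of_mem (Set.mem_Icc.mpr ⟨hx1, hx2⟩)]
      have hD2 : (a - s) * (a + s) = 1 + x ^ 2 := by nlinarith
      rw [div_sub_div _ _ (ne_of_gt hcs) (by positivity : (a + s) ≠ 0)]
      rw [hD2]
      congr 1
      ring
    · have hx2 : r ^ 2 < x ^ 2 := by
        simp only [Set.mem_Icc, not_and_or, not_le] at hxr
        rcases hxr with h | h <;> nlinarith
      have hfun : (fun y => Set.indicator D (fun p : ℝ × ℝ => 1 / p.2 ^ 2) (x, y))
          = fun _ => (0 : ℝ) := by
        funext y
        apply Set.indicator_of_notMem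
        intro h
        simp only [hDdef, Set.mem_setOf_eq] at h
        nlinarith [sq_nonneg (y - a)]
      rw [hfun, Set.indicator_of_notMem hxr, integral_zero]
  simp only [hx_eq]
  rw [integral_indicator measurableSet_Icc, integral_Icc_eq_integral_Ioc,
    ← intervalIntegral.integral_of_le (by linarith : -r ≤ r)]
  exact outer_int r a hr ha ha2
end

section
/- For every integer n ≥ 1, the real vector space of harmonic polynomials p ∈ ℝ[x,y,z] that are homogeneous of degree n and vanish identically on the plane z = 0 (i.e., p(x,y,0) = 0 for all x,y ∈ ℝ) has dimension n. -/
open MvPolynomial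

/-- The polynomial Laplacian `∂²/∂x² + ∂²/∂y² + ∂²/∂z²` on `ℝ[x,y,z]`, as a linear map. -/
noncomputable def polyLap : MvPolynomial (Fin 3) ℝ →ₗ[ℝ] MvPolynomial (Fin 3) ℝ :=
  ∑ i : Fin 3, ((pderiv i).toLinearMap ∘ₗ (pderiv i).toLinearMap)

/-- Evaluation of a polynomial in `ℝ[x,y,z]` on the plane `z = 0`, as a linear map
into functions of `(x,y)`; its kernel consists of the polynomials `p` with
`p(x,y,0) = 0` for all real `x,y`. -/
noncomputable def evalPlane : MvPolynomial (Fin 3) ℝ →ₗ[ℝ] (ℝ × ℝ → ℝ) where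
  toFun p := fun q => eval ![q.1, q.2, 0] p
  map_add' p q := by funext; simp
  map_smul' r p := by funext; simp [smul_eval]

namespace Stmt12Aux

abbrev P := MvPolynomial (Fin 3) ℝ

lemma polyLap_apply (p : P) : polyLap p = ∑ i : Fin 3, pderiv i (pderiv i p) := by
  simp [polyLap]

noncomputable def s0 : P →ₐ[ℝ] P := aeval (fun i => if i = 2 then 0 else X i)

lemma s0_X2 : s0 (X 2) = 0 := by simp [s0]

lemma X_dvd_sub_s0 (p : P) : (X 2 : P) ∣ p - s0 p := by
  induction p using MvPolynomial.induction_on with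
  | C a => simp [s0]
  | add p q hp hq =>
    have : p + q - s0 (p + q) = (p - s0 p) + (q - s0 q) := by rw [map_add]; ring
    rw [this]; exact dvd_add hp hq
  | mul_X p i hp =>
    by_cases h : i = 2
    · subst h
      rw [map_mul, s0_X2, mul_zero, sub_zero]
      exact ⟨p, mul_comm p (X 2)⟩
    · have : s0 (X i) = X i := by simp [s0, h]
      rw [map_mul, this]
      have : p * X i - s0 p * X i = (p - s0 p) * X i := by ring
      rw [this]
      exact hp.mul_right _

lemma eval_s0 (x : Fin 3 → ℝ) (p : P) :
    eval x (s0 p) = eval ![x 0, x 1, 0] p := by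
  have h1 : eval x (s0 p) = aeval (R := ℝ) x (s0 p) := rfl
  rw [h1, s0, comp_aeval_apply]
  have h2 : (fun i : Fin 3 => aeval (R := ℝ) x (if i = 2 then (0:P) else X i))
      = fun i => (![x 0, x 1, 0] : Fin 3 → ℝ) i := by
    funext i; fin_cases i <;> simp
  rw [h2]
  rfl

lemma s0_eq_zero_of_evalPlane {p : P} (h : ∀ a b : ℝ, eval ![a, b, 0] p = 0) : s0 p = 0 := by
  apply MvPolynomial.funext
  intro x
  rw [eval_s0, map_zero]
  have := h (x 0) (x 1)
  convert this using 2

lemma X_dvd_of_coeff {p : P} (h : ∀ d : Fin 3 →₀ ℕ, d 2 = 0 → coeff d p = 0) :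
    (X 2 : P) ∣ p := by
  rw [p.as_sum]
  apply Finset.dvd_sum
  intro d hd
  have hd2 : d 2 ≠ 0 := by
    intro h0
    exact (mem_support_iff.mp hd) (h d h0)
  refine ⟨monomial (d - Finsupp.single 2 1) (coeff d p), ?_⟩
  rw [X, monomial_mul, one_mul]
  congr 1
  rw [← add_tsub_cancel_of_le (Finsupp.single_le_iff.mpr (Nat.one_le_iff_ne_zero.mpr hd2))]
  simp

lemma coeff_eq_zero_of_X_pow_dvd {k : ℕ} {p : P} (h : (X 2 : P) ^ k ∣ p)
    {d : Fin 3 →₀ ℕ} (hd : d 2 < k) : coeff d p = 0 := by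
  classical
  induction k generalizing p d with
  | zero => omega
  | succ k ih =>
    obtain ⟨g, rfl⟩ := h
    rw [pow_succ', mul_assoc, coeff_X_mul']
    by_cases h2 : (2 : Fin 3) ∈ d.support
    · rw [if_pos h2]
      apply ih ⟨g, rfl⟩
      have h3 := Finsupp.mem_support_iff.mp h2
      simp only [Finsupp.tsub_apply, Finsupp.single_eq_same]
      omega
    · rw [if_neg h2]

lemma pderiv_pderiv_comm (i j : Fin 3) (p : P) :
    pderiv i (pderiv j p) = pderiv j (pderiv i p) := by
  induction p using MvPolynomial.induction_on with
  | C a => simp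
  | add p q hp hq => simp [hp, hq]
  | mul_X p s hp =>
    simp only [pderiv_mul, pderiv_X, map_add, hp, Pi.single_apply]
    by_cases hjs : s = j <;> by_cases his : s = i <;>
      simp [hjs, his, apply_ite (pderiv i), apply_ite (pderiv j), pderiv_one] <;> ring

lemma degree3 (d : Fin 3 →₀ ℕ) : d.degree = d 0 + d 1 + d 2 := by
  rw [Finsupp.degree_apply,
    Finset.sum_subset (Finset.subset_univ _) (fun i _ hi => Finsupp.notMem_support_iff.mp hi)]
  exact Fin.sum_univ_three _

lemma isHom_degree3 {p : P} {m : ℕ} (h : p.IsHomogeneous m) {d : Fin 3 →₀ ℕ}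
    (hd : coeff d p ≠ 0) : d 0 + d 1 + d 2 = m := by
  rw [← degree3, Finsupp.degree_eq_weight_one]
  exact h hd

lemma isHom_pderiv {p : P} {m : ℕ} (h : p.IsHomogeneous m) (i : Fin 3) :
    (pderiv i p).IsHomogeneous (m - 1) := by
  rw [p.as_sum, map_sum]
  apply IsHomogeneous.sum
  intro d hd
  rw [pderiv_monomial]
  by_cases h0 : d i = 0
  · rw [h0]; simp only [Nat.cast_zero, mul_zero, map_zero]
    exact isHomogeneous_zero _ _ _
  · apply isHomogeneous_monomial
    have hdeg : d 0 + d 1 + d 2 = m := isHom_degree3 h (mem_support_iff.mp hd)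
    rw [degree3]
    simp only [Finsupp.tsub_apply, Finsupp.single_apply]
    fin_cases i <;> simp_all <;> omega

lemma pderiv_eq_zero_of_isHom_zero {r : P} (h : r.IsHomogeneous 0) (j : Fin 3) :
    pderiv j r = 0 := by
  rw [r.as_sum, map_sum]
  apply Finset.sum_eq_zero
  intro d hd
  have hd0 : d = 0 := by
    have h3 := isHom_degree3 h (mem_support_iff.mp hd)
    ext i
    fin_cases i <;> simp <;> omega
  subst hd0
  simp

lemma polyLap_isHom {p : P} {m : ℕ} (h : p.IsHomogeneous m) :
    (polyLap p).IsHomogeneous (m - 2) := by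
  rw [polyLap_apply]
  apply IsHomogeneous.sum
  intro i _
  have := isHom_pderiv (isHom_pderiv h i) i
  rwa [Nat.sub_sub] at this

lemma polyLap_eq_zero_of_le_one {p : P} {m : ℕ} (h : p.IsHomogeneous m) (hm : m ≤ 1) :
    polyLap p = 0 := by
  rw [polyLap_apply]
  apply Finset.sum_eq_zero
  intro i _
  have h1 : (pderiv i p).IsHomogeneous 0 := by
    have := isHom_pderiv h i
    rwa [show m - 1 = 0 by omega] at this
  exact pderiv_eq_zero_of_isHom_zero h1 i

lemma lap_iter {q : P} {d : ℕ} (h : q.IsHomogeneous d) (j : ℕ) :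
    ((⇑polyLap)^[j] q).IsHomogeneous (d - 2*j) ∧ (d < 2*j → (⇑polyLap)^[j] q = 0) := by
  induction j with
  | zero => exact ⟨by simpa using h, by omega⟩
  | succ j ih =>
    rw [Function.iterate_succ_apply']
    constructor
    · have := polyLap_isHom ih.1
      rwa [show d - 2*j - 2 = d - 2*(j+1) by omega] at this
    · intro hd
      by_cases hd2 : d < 2*j
      · rw [ih.2 hd2, map_zero]
      · exact polyLap_eq_zero_of_le_one ih.1 (by omega)

lemma key (j : ℕ) (r : P) (hr : pderiv 2 r = 0) :
    polyLap (X 2 ^ (2*j+1) * r)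
      = X 2 ^ (2*j+1) * polyLap r
        + (((2*j+1)*(2*j) : ℕ) : P) * (X 2 ^ (2*j-1) * r) := by
  have h20 : (2 : Fin 3) ≠ 0 := by decide
  have h21 : (2 : Fin 3) ≠ 1 := by decide
  rw [polyLap_apply, polyLap_apply, Fin.sum_univ_three, Fin.sum_univ_three]
  simp only [pderiv_mul, pderiv_pow, pderiv_X_self, pderiv_X_of_ne h20, pderiv_X_of_ne h21,
    hr, mul_zero, zero_mul, add_zero, zero_add, mul_one, map_add, map_mul, map_zero,
    map_natCast, Derivation.map_natCast, Nat.add_sub_cancel]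
  push_cast
  ring

lemma key2 (m : ℕ) (g : P) :
    polyLap (X 2 ^ (m+2) * g)
      = X 2 ^ m * (X 2 ^ 2 * polyLap g + (((m+2)*(m+1) : ℕ) : P) * g
          + ((2*(m+2) : ℕ) : P) * (X 2 * pderiv 2 g)) := by
  have h20 : (2 : Fin 3) ≠ 0 := by decide
  have h21 : (2 : Fin 3) ≠ 1 := by decide
  rw [polyLap_apply, polyLap_apply, Fin.sum_univ_three, Fin.sum_univ_three]
  simp only [pderiv_mul, pderiv_pow, pderiv_X_self, pderiv_X_of_ne h20, pderiv_X_of_ne h21,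
    mul_zero, zero_mul, add_zero, zero_add, mul_one, map_add, map_mul, map_zero,
    map_natCast, Derivation.map_natCast, Nat.add_sub_cancel]
  push_cast
  ring

lemma harmonic_eq_zero {p : P} (hL : polyLap p = 0) (h2 : (X 2 : P) ^ 2 ∣ p) : p = 0 := by
  have step : ∀ m : ℕ, (X 2 : P) ^ (m+2) ∣ p → (X 2 : P) ^ (m+3) ∣ p := by
    intro m hm
    obtain ⟨g, hg⟩ := hm
    have hA : X 2 ^ m * (X 2 ^ 2 * polyLap g + (((m+2)*(m+1) : ℕ) : P) * g
        + ((2*(m+2) : ℕ) : P) * (X 2 * pderiv 2 g)) = 0 := by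
      rw [← key2, ← hg, hL]
    have hXm : (X 2 : P) ^ m ≠ 0 := pow_ne_zero _ (X_ne_zero 2)
    have hA0 : X 2 ^ 2 * polyLap g + (((m+2)*(m+1) : ℕ) : P) * g
        + ((2*(m+2) : ℕ) : P) * (X 2 * pderiv 2 g) = 0 :=
      (mul_eq_zero.mp hA).resolve_left hXm
    have hs0 : (((m+2)*(m+1) : ℕ) : P) * s0 g = 0 := by
      have := congrArg s0 hA0
      simpa [map_add, map_mul, map_pow, s0_X2, map_natCast, map_ofNat] using this
    have hcast : (((m+2)*(m+1) : ℕ) : P) ≠ 0 := by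
      rw [Nat.cast_ne_zero]
      positivity
    have hs0g : s0 g = 0 := (mul_eq_zero.mp hs0).resolve_left hcast
    have hdvd : (X 2 : P) ∣ g := by
      have := X_dvd_sub_s0 g
      rwa [hs0g, sub_zero] at this
    obtain ⟨g', hg'⟩ := hdvd
    exact ⟨g', by rw [hg, hg', pow_succ]; ring⟩
  have all : ∀ m : ℕ, (X 2 : P) ^ (m+2) ∣ p := by
    intro m
    induction m with
    | zero => exact h2
    | succ m ih => exact step m ih
  have : ∀ d : Fin 3 →₀ ℕ, coeff d p = 0 := by
    intro d
    exact coeff_eq_zero_of_X_pow_dvd (all (d 2)) (by omega)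
  ext d
  simp [this d]

/-- The exponent `(a, n-1-a, 0)`. -/
noncomputable def D (n : ℕ) (a : Fin n) : Fin 3 →₀ ℕ :=
  Finsupp.single 0 (a : ℕ) + Finsupp.single 1 (n - 1 - a)

lemma D_apply0 (n : ℕ) (a : Fin n) : D n a 0 = (a : ℕ) := by simp [D]
lemma D_apply1 (n : ℕ) (a : Fin n) : D n a 1 = n - 1 - a := by
  simp [D, Finsupp.single_apply]
lemma D_apply2 (n : ℕ) (a : Fin n) : D n a 2 = 0 := by
  simp [D, Finsupp.single_apply]

/-- The exponent `(a, n-1-a, 1)`. -/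
noncomputable def idx (n : ℕ) (a : Fin n) : Fin 3 →₀ ℕ := Finsupp.single 2 1 + D n a

noncomputable def Psi (n : ℕ) : P →ₗ[ℝ] (Fin n → ℝ) :=
  LinearMap.pi (fun a => lcoeff ℝ (idx n a))

noncomputable def qf (n : ℕ) (f : Fin n → ℝ) : P :=
  ∑ a, monomial (D n a) (f a)

noncomputable def c (j : ℕ) : ℝ := (-1)^j / (2*j+1).factorial

noncomputable def Ef (n : ℕ) (f : Fin n → ℝ) : P :=
  ∑ j ∈ Finset.range n, c j • (X 2 ^ (2*j+1) * (⇑polyLap)^[j] (qf n f))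

lemma pderiv2_qf (n : ℕ) (f : Fin n → ℝ) : pderiv 2 (qf n f) = 0 := by
  rw [qf, map_sum]
  apply Finset.sum_eq_zero
  intro a _
  rw [pderiv_monomial]
  rw [show (D n a) 2 = 0 from D_apply2 n a]
  simp

lemma qf_isHom (n : ℕ) (hn : 1 ≤ n) (f : Fin n → ℝ) : (qf n f).IsHomogeneous (n-1) := by
  rw [← mem_homogeneousSubmodule, qf]
  apply Submodule.sum_mem
  intro a _
  rw [mem_homogeneousSubmodule]
  apply isHomogeneous_monomial
  rw [degree3, D_apply0, D_apply1, D_apply2]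
  have := a.isLt
  omega

lemma pderiv_two_polyLap (s : P) : pderiv 2 (polyLap s) = polyLap (pderiv 2 s) := by
  rw [polyLap_apply, polyLap_apply, map_sum]
  apply Finset.sum_congr rfl
  intro i _
  rw [pderiv_pderiv_comm 2 i, pderiv_pderiv_comm 2 i]

lemma pderiv2_iter (n : ℕ) (f : Fin n → ℝ) (j : ℕ) :
    pderiv 2 ((⇑polyLap)^[j] (qf n f)) = 0 := by
  induction j with
  | zero => exact pderiv2_qf n f
  | succ j ih =>
    rw [Function.iterate_succ_apply', pderiv_two_polyLap, ih, map_zero]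

lemma c_rec (j : ℕ) : c (j+1) * (((2*(j+1)+1) * (2*(j+1)) : ℕ) : ℝ) = - c j := by
  have h1 : (2*(j+1)+1).factorial = (2*(j+1)+1) * ((2*(j+1)) * (2*j+1).factorial) := by
    rw [show 2*(j+1)+1 = (2*j+1) + 2 by ring]
    rw [Nat.factorial_succ, Nat.factorial_succ]
    ring_nf
  rw [c, c, h1]
  have hf : ((2*j+1).factorial : ℝ) ≠ 0 := Nat.cast_ne_zero.mpr (Nat.factorial_ne_zero _)
  have h2 : ((2*(j+1)+1 : ℕ) : ℝ) ≠ 0 := by positivity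
  have h3 : ((2*(j+1) : ℕ) : ℝ) ≠ 0 := by positivity
  push_cast
  field_simp
  ring

lemma evalPlane_apply (p : P) (q : ℝ × ℝ) : evalPlane p q = eval ![q.1, q.2, 0] p := rfl

lemma Psi_apply (n : ℕ) (p : P) (a : Fin n) : Psi n p a = coeff (idx n a) p := rfl

lemma polyLap_Ef (n : ℕ) (hn : 1 ≤ n) (f : Fin n → ℝ) : polyLap (Ef n f) = 0 := by
  obtain ⟨N, rfl⟩ : ∃ N, n = N + 1 := ⟨n-1, by omega⟩
  set q := qf (N+1) f with hq
  set r : ℕ → P := fun j => (⇑polyLap)^[j] q with hr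
  have hhom : q.IsHomogeneous N := by
    have := qf_isHom (N+1) hn f
    rwa [Nat.add_sub_cancel] at this
  have hlap : ∀ j, polyLap (r j) = r (j+1) := fun j =>
    (Function.iterate_succ_apply' _ _ _).symm
  set T : ℕ → P := fun j => c j • (X 2 ^ (2*j+1) * r (j+1)) with hT
  set S : ℕ → P := fun j =>
    c j • ((((2*j+1)*(2*j) : ℕ) : P) * (X 2 ^ (2*j-1) * r j)) with hS
  have hsum : polyLap (Ef (N+1) f) =
      (∑ j ∈ Finset.range (N+1), T j) + ∑ j ∈ Finset.range (N+1), S j := by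
    rw [Ef, map_sum, ← Finset.sum_add_distrib]
    apply Finset.sum_congr rfl
    intro j _
    rw [map_smul, key j (r j) (pderiv2_iter _ f j), hlap j, smul_add]
  have hS0 : S 0 = 0 := by simp [hS]
  have hST : ∀ j, S (j+1) = - T j := by
    intro j
    rw [hS, hT]
    simp only []
    rw [show 2*(j+1)-1 = 2*j+1 by omega]
    rw [← C_eq_coe_nat, ← smul_eq_C_mul, smul_smul, c_rec, neg_smul]
  have h2 : ∑ j ∈ Finset.range (N+1), S j = - ∑ j ∈ Finset.range N, T j := by
    rw [Finset.sum_range_succ', hS0, add_zero, ← Finset.sum_neg_distrib]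
    exact Finset.sum_congr rfl fun j _ => hST j
  have hTN : T N = 0 := by
    have h0 : r (N+1) = 0 := (lap_iter hhom (N+1)).2 (by omega)
    rw [hT]
    simp only []
    rw [h0, mul_zero, smul_zero]
  rw [hsum, Finset.sum_range_succ, h2, hTN]
  abel

lemma evalPlane_Ef (n : ℕ) (f : Fin n → ℝ) : evalPlane (Ef n f) = 0 := by
  rw [Ef, map_sum]
  apply Finset.sum_eq_zero
  intro j _
  rw [map_smul]
  have h0 : evalPlane (X 2 ^ (2*j+1) * (⇑polyLap)^[j] (qf n f)) = 0 := by
    funext qq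
    rw [evalPlane_apply, map_mul, map_pow, eval_X]
    have : (![qq.1, qq.2, 0] : Fin 3 → ℝ) 2 = 0 := rfl
    rw [this, zero_pow (by omega), zero_mul]
    rfl
  rw [h0, smul_zero]

lemma Ef_isHom (n : ℕ) (hn : 1 ≤ n) (f : Fin n → ℝ) :
    Ef n f ∈ homogeneousSubmodule (Fin 3) ℝ n := by
  rw [Ef]
  apply Submodule.sum_mem
  intro j _
  apply Submodule.smul_mem
  by_cases h : 2*j ≤ n-1
  · rw [mem_homogeneousSubmodule]
    have h1 := (lap_iter (qf_isHom n hn f) j).1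
    have h2 := isHomogeneous_X_pow (R := ℝ) (2 : Fin 3) (2*j+1)
    have h3 := h2.mul h1
    rwa [show (2*j+1) + ((n-1) - 2*j) = n by omega] at h3
  · rw [(lap_iter (qf_isHom n hn f) j).2 (by omega), mul_zero]
    exact Submodule.zero_mem _

lemma Psi_Ef (n : ℕ) (hn : 1 ≤ n) (f : Fin n → ℝ) : Psi n (Ef n f) = f := by
  funext a
  rw [Psi_apply, Ef, coeff_sum]
  rw [Finset.sum_eq_single_of_mem 0 (Finset.mem_range.mpr hn)]
  · rw [coeff_smul, Function.iterate_zero_apply]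
    rw [show 2*0+1 = 1 by rfl, pow_one, idx, coeff_X_mul]
    rw [qf, coeff_sum, Finset.sum_eq_single_of_mem a (Finset.mem_univ a)]
    · rw [coeff_monomial, if_pos rfl]
      simp [c]
    · intro b _ hba
      rw [coeff_monomial, if_neg]
      intro hDb
      apply hba
      have := DFunLike.congr_fun hDb 0
      rw [D_apply0, D_apply0] at this
      exact Fin.ext this
  · intro j _ hj0
    obtain ⟨j', rfl⟩ : ∃ j'', j = j''+1 := ⟨j-1, by omega⟩
    rw [coeff_smul]
    rw [show X 2 ^ (2*(j'+1)+1) * (⇑polyLap)^[j'+1] (qf n f)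
        = X 2 * (X 2 * (X 2 ^ (2*j'+1) * (⇑polyLap)^[j'+1] (qf n f))) by ring]
    rw [idx, coeff_X_mul, coeff_X_mul', if_neg, smul_zero]
    rw [Finsupp.mem_support_iff]
    simp [D_apply2]

lemma inj (n : ℕ) (hn : 1 ≤ n) {p : P} (hhom : p.IsHomogeneous n) (hL : polyLap p = 0)
    (hev : evalPlane p = 0) (hPsi : Psi n p = 0) : p = 0 := by
  have hs0 : s0 p = 0 := by
    apply s0_eq_zero_of_evalPlane
    intro a b
    have := congrFun hev (a, b)
    rwa [evalPlane_apply] at this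
  have h1 : (X 2 : P) ∣ p := by
    have := X_dvd_sub_s0 p
    rwa [hs0, sub_zero] at this
  obtain ⟨g, hg⟩ := h1
  have hc1 : ∀ e : Fin 3 →₀ ℕ, e 2 = 1 → coeff e p = 0 := by
    intro e he
    by_cases hdeg : e 0 + e 1 + e 2 = n
    · have he0 : (e 0) < n := by omega
      have heq : e = idx n ⟨e 0, he0⟩ := by
        ext i
        fin_cases i <;>
          simp [idx, Finsupp.add_apply, D, Finsupp.single_apply] <;> omega
      rw [heq]
      have := congrFun hPsi ⟨e 0, he0⟩
      rwa [Psi_apply] at this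
    · by_contra hne
      exact hdeg (isHom_degree3 hhom hne)
  have h2 : (X 2 : P) ∣ g := by
    apply X_dvd_of_coeff
    intro u hu
    have hcu : coeff (Finsupp.single 2 1 + u) p = coeff u g := by
      rw [hg, coeff_X_mul]
    rw [← hcu]
    apply hc1
    simp [Finsupp.add_apply, hu]
  obtain ⟨g', hg'⟩ := h2
  exact harmonic_eq_zero hL ⟨g', by rw [hg, hg']; ring⟩

end Stmt12Aux

/-- The space of harmonic polynomials in `ℝ[x,y,z]`, homogeneous of degree `n`,
vanishing identically on the plane `z = 0`, has dimension `n`. -/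
theorem stmt12 (n : ℕ) (hn : 1 ≤ n) :
    Module.finrank ℝ
      ↥(homogeneousSubmodule (Fin 3) ℝ n ⊓ LinearMap.ker polyLap ⊓
        LinearMap.ker evalPlane) = n := by
  classical
  set V := homogeneousSubmodule (Fin 3) ℝ n ⊓ LinearMap.ker polyLap ⊓
    LinearMap.ker evalPlane with hV
  let Φ : V →ₗ[ℝ] (Fin n → ℝ) := (Stmt12Aux.Psi n).comp V.subtype
  have hinj : Function.Injective Φ := by
    rw [← LinearMap.ker_eq_bot]
    rw [Submodule.eq_bot_iff]
    intro x hx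
    rw [LinearMap.mem_ker] at hx
    have hm := x.2
    obtain ⟨h12, he⟩ := Submodule.mem_inf.mp hm
    obtain ⟨hh, hk⟩ := Submodule.mem_inf.mp h12
    have h0 := Stmt12Aux.inj n hn hh (LinearMap.mem_ker.mp hk) (LinearMap.mem_ker.mp he) hx
    exact Subtype.ext h0
  have hsurj : Function.Surjective Φ := by
    intro f
    have hmem : Stmt12Aux.Ef n f ∈ V := by
      rw [hV]
      refine Submodule.mem_inf.mpr ⟨Submodule.mem_inf.mpr ⟨?_, ?_⟩, ?_⟩
      · exact Stmt12Aux.Ef_isHom n hn f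
      · exact LinearMap.mem_ker.mpr (Stmt12Aux.polyLap_Ef n hn f)
      · exact LinearMap.mem_ker.mpr (Stmt12Aux.evalPlane_Ef n f)
    exact ⟨⟨_, hmem⟩, Stmt12Aux.Psi_Ef n hn f⟩
  have e := LinearEquiv.ofBijective Φ ⟨hinj, hsurj⟩
  rw [LinearEquiv.finrank_eq e, Module.finrank_fin_fun]
end

section
/- For every integer i ≥ 1, the real vector space of harmonic polynomials p ∈ ℝ[x,y,z] that are homogeneous of degree 2i+1 and odd in each of the three variables separately (p(−x,y,z) = −p(x,y,z), p(x,−y,z) = −p(x,y,z), p(x,y,−z) = −p(x,y,z) identically) has dimension i. -/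
set_option maxRecDepth 10000
set_option synthInstance.maxHeartbeats 1000000

open MvPolynomial

/-- The linear map `p ↦ (x ↦ p(flipᵢ x) + p(x))`, where `flipᵢ` negates the `i`-th
coordinate; its kernel consists of the polynomials that are odd in the `i`-th
variable, i.e. satisfy `p(flipᵢ x) = -p(x)` for all `x ∈ ℝ³`. -/
noncomputable def oddDefect (i : Fin 3) :
    MvPolynomial (Fin 3) ℝ →ₗ[ℝ] ((Fin 3 → ℝ) → ℝ) where
  toFun p := fun x => eval (Function.update x i (-(x i))) p + eval x p
  map_add' p q := by funext; simp; ring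
  map_smul' r p := by funext; simp [smul_eval]; ring

namespace Stmt13Aux

lemma aeval_eq_eval (y : Fin 3 → ℝ) (q : MvPolynomial (Fin 3) ℝ) :
    (aeval y q : ℝ) = eval y q := by
  rw [aeval_def, MvPolynomial.eval, coe_eval₂Hom, Algebra.algebraMap_self]

/-- The algebra map negating the `j`-th variable. -/
noncomputable def flip (j : Fin 3) : MvPolynomial (Fin 3) ℝ →ₐ[ℝ] MvPolynomial (Fin 3) ℝ :=
  aeval (fun k => if k = j then -X k else X k)

lemma eval_flip (j : Fin 3) (x : Fin 3 → ℝ) (p : MvPolynomial (Fin 3) ℝ) :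
    eval x (flip j p) = eval (Function.update x j (-(x j))) p := by
  have h1 : eval x (flip j p)
      = ((aeval x).comp (aeval (fun k => if k = j then -X k else X k))) p := by
    rw [AlgHom.comp_apply]
    exact (aeval_eq_eval x _).symm
  rw [h1, comp_aeval]
  have h2 : (fun i => aeval x (if i = j then -X i else (X i : MvPolynomial (Fin 3) ℝ)))
      = Function.update x j (-(x j)) := by
    funext k
    by_cases hk : k = j
    · subst hk; simp
    · simp [hk, Function.update_apply]
  rw [h2, aeval_eq_eval]

lemma flip_monomial (j : Fin 3) (m : Fin 3 →₀ ℕ) (c : ℝ) :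
    flip j (monomial m c) = ((-1 : ℝ) ^ (m j)) • (monomial m c : MvPolynomial (Fin 3) ℝ) := by
  rw [flip, aeval_monomial, Finsupp.prod_fintype _ _ (fun i => pow_zero _)]
  rw [← Finset.mul_prod_erase Finset.univ _ (Finset.mem_univ j), if_pos rfl, neg_pow]
  have h2 : ∀ k ∈ Finset.univ.erase j,
      (if k = j then -X k else (X k : MvPolynomial (Fin 3) ℝ)) ^ (m k) = X k ^ (m k) := by
    intro k hk
    rw [if_neg (Finset.mem_erase.mp hk).1]
  rw [Finset.prod_congr rfl h2]
  have h3 : monomial m c = C c * ∏ k : Fin 3, (X k : MvPolynomial (Fin 3) ℝ) ^ (m k) := by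
    rw [monomial_eq, Finsupp.prod_fintype _ _ (fun i => pow_zero _)]
  have h4 : ((-1 : MvPolynomial (Fin 3) ℝ)) ^ m j = C ((-1 : ℝ) ^ m j) := by
    rw [map_pow, map_neg, map_one]
  rw [h3, ← Finset.mul_prod_erase Finset.univ
    (fun k => (X k : MvPolynomial (Fin 3) ℝ) ^ (m k)) (Finset.mem_univ j)]
  rw [algebraMap_eq, smul_eq_C_mul, h4]
  ring

lemma coeff_flip (j : Fin 3) (m : Fin 3 →₀ ℕ) (p : MvPolynomial (Fin 3) ℝ) :
    coeff m (flip j p) = (-1 : ℝ) ^ (m j) * coeff m p := by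
  conv_lhs => rw [as_sum p]
  rw [map_sum, coeff_sum]
  have h1 : ∀ d ∈ p.support, coeff m (flip j (monomial d (coeff d p)))
      = if d = m then (-1 : ℝ) ^ (d j) * coeff d p else 0 := by
    intro d _
    rw [flip_monomial, coeff_smul, coeff_monomial, smul_eq_mul, mul_ite, mul_zero]
  rw [Finset.sum_congr rfl h1, Finset.sum_ite_eq' p.support m
    (fun d => (-1 : ℝ) ^ (d j) * coeff d p)]
  by_cases hm : m ∈ p.support
  · rw [if_pos hm]
  · rw [if_neg hm, notMem_support_iff.mp hm, mul_zero]

lemma oddKer_coeff {j : Fin 3} {p : MvPolynomial (Fin 3) ℝ} (h : oddDefect j p = 0)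
    {m : Fin 3 →₀ ℕ} (hm : coeff m p ≠ 0) : Odd (m j) := by
  have hfun : flip j p + p = 0 := by
    apply MvPolynomial.funext
    intro x
    rw [map_add, eval_flip, map_zero]
    exact congrFun h x
  rw [← Nat.not_even_iff_odd]
  intro heven
  have hc : coeff m (flip j p + p) = 0 := by rw [hfun, coeff_zero]
  rw [coeff_add, coeff_flip, heven.neg_one_pow, one_mul] at hc
  exact hm (by linarith)

lemma monomial_mem_oddKer {j : Fin 3} {m : Fin 3 →₀ ℕ} (h : Odd (m j)) (c : ℝ) :
    oddDefect j (monomial m c) = 0 := by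
  funext x
  show eval (Function.update x j (-(x j))) (monomial m c) + eval x (monomial m c) = 0
  rw [← eval_flip, flip_monomial, smul_eval, h.neg_one_pow]
  ring

lemma degree3 (m : Fin 3 →₀ ℕ) : m.degree = m 0 + m 1 + m 2 := by
  have h : m.degree = ∑ k : Fin 3, m k := by
    rw [Finsupp.degree]
    apply Finset.sum_subset (Finset.subset_univ _)
    intro k _ hk
    exact Finsupp.notMem_support_iff.mp hk
  rw [h, Fin.sum_univ_three]

/-- all-odd exponent triples of total degree `d`. -/
def OS (d : ℕ) : Set (Fin 3 →₀ ℕ) := {m | (∀ j, Odd (m j)) ∧ m.degree = d}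

/-- monomials with all-odd exponents of degree `d`. -/
def gens (d : ℕ) : Set (MvPolynomial (Fin 3) ℝ) :=
  (fun m => (monomial m 1 : MvPolynomial (Fin 3) ℝ)) '' OS d

lemma inf_eq_span (d : ℕ) :
    (homogeneousSubmodule (Fin 3) ℝ d ⊓ LinearMap.ker (oddDefect 0) ⊓
      LinearMap.ker (oddDefect 1) ⊓ LinearMap.ker (oddDefect 2))
      = Submodule.span ℝ (gens d) := by
  apply le_antisymm
  · intro p hp
    obtain ⟨⟨⟨hhom, h0⟩, h1⟩, h2⟩ := hp
    have hhom' : p.IsHomogeneous d := hhom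
    rw [SetLike.mem_coe, LinearMap.mem_ker] at h0 h1 h2
    rw [as_sum p]
    apply Submodule.sum_mem
    intro m hm
    have hcm : coeff m p ≠ 0 := mem_support_iff.mp hm
    have hodd : ∀ j, Odd (m j) := by
      intro j
      fin_cases j
      · exact oddKer_coeff h0 hcm
      · exact oddKer_coeff h1 hcm
      · exact oddKer_coeff h2 hcm
    have hdeg : m.degree = d := by
      rw [Finsupp.degree_eq_weight_one]
      exact hhom' hcm
    have : (monomial m (coeff m p) : MvPolynomial (Fin 3) ℝ)
        = (coeff m p) • monomial m 1 := by
      rw [smul_monomial, smul_eq_mul, mul_one]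
    rw [this]
    exact Submodule.smul_mem _ _ (Submodule.subset_span ⟨m, ⟨hodd, hdeg⟩, rfl⟩)
  · rw [Submodule.span_le]
    rintro - ⟨m, ⟨hodd, hdeg⟩, rfl⟩
    refine ⟨⟨⟨?_, ?_⟩, ?_⟩, ?_⟩
    · exact isHomogeneous_monomial 1 hdeg
    · exact LinearMap.mem_ker.mpr (monomial_mem_oddKer (hodd 0) 1)
    · exact LinearMap.mem_ker.mpr (monomial_mem_oddKer (hodd 1) 1)
    · exact LinearMap.mem_ker.mpr (monomial_mem_oddKer (hodd 2) 1)

/-! ### Counting -/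

/-- pairs `(a,b)` with `a + b ≤ n`. -/
def tri (n : ℕ) : Finset (ℕ × ℕ) := (Finset.range (n+1)).biUnion Finset.HasAntidiagonal.antidiagonal

lemma mem_tri {n : ℕ} {p : ℕ × ℕ} : p ∈ tri n ↔ p.1 + p.2 ≤ n := by
  simp only [tri, Finset.mem_biUnion, Finset.mem_range, Finset.HasAntidiagonal.mem_antidiagonal]
  constructor
  · rintro ⟨s, hs, h⟩; omega
  · intro h; exact ⟨p.1 + p.2, by omega, rfl⟩

lemma card_tri (n : ℕ) : (tri n).card = ∑ s ∈ Finset.range (n+1), (s+1) := by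
  rw [tri, Finset.card_biUnion]
  · exact Finset.sum_congr rfl (fun s _ => Finset.Nat.card_antidiagonal s)
  · intro a _ b _ hab
    simp only [Finset.disjoint_left]
    intro p hp hp'
    rw [Finset.HasAntidiagonal.mem_antidiagonal] at hp hp'
    omega

noncomputable def mk3 (a b c : ℕ) : Fin 3 →₀ ℕ := Finsupp.equivFunOnFinite.symm ![a, b, c]

@[simp] lemma mk3_zero (a b c : ℕ) : mk3 a b c 0 = a := rfl
@[simp] lemma mk3_one (a b c : ℕ) : mk3 a b c 1 = b := rfl
@[simp] lemma mk3_two (a b c : ℕ) : mk3 a b c 2 = c := rfl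

noncomputable def SF (n : ℕ) : Finset (Fin 3 →₀ ℕ) :=
  (tri n).image (fun p => mk3 (2*p.1+1) (2*p.2+1) (2*(n - p.1 - p.2)+1))

lemma OS_eq_SF (n : ℕ) : OS (2*n+3) = ↑(SF n) := by
  ext m
  simp only [OS, Set.mem_setOf_eq, SF, Finset.coe_image, Set.mem_image, Finset.mem_coe]
  constructor
  · rintro ⟨hodd, hdeg⟩
    obtain ⟨a, ha⟩ := hodd 0
    obtain ⟨b, hb⟩ := hodd 1
    obtain ⟨c, hc⟩ := hodd 2
    rw [degree3, ha, hb, hc] at hdeg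
    refine ⟨(a, b), mem_tri.mpr (by omega), ?_⟩
    ext k
    fin_cases k
    · simp [ha]
    · simp [hb]
    · simp [hc]; omega
  · rintro ⟨p, hp, rfl⟩
    rw [mem_tri] at hp
    refine ⟨?_, ?_⟩
    · intro j
      fin_cases j
      · exact ⟨p.1, by simp⟩
      · exact ⟨p.2, by simp⟩
      · exact ⟨n - p.1 - p.2, by simp⟩
    · rw [degree3]
      simp only [mk3_zero, mk3_one, mk3_two]
      omega

lemma OS_one : OS 1 = ∅ := by
  ext m
  simp only [OS, Set.mem_setOf_eq, Set.mem_empty_iff_false, iff_false, not_and]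
  intro hodd
  obtain ⟨a, ha⟩ := hodd 0
  obtain ⟨b, hb⟩ := hodd 1
  obtain ⟨c, hc⟩ := hodd 2
  rw [degree3, ha, hb, hc]
  omega

lemma card_SF (n : ℕ) : (SF n).card = (tri n).card := by
  rw [SF, Finset.card_image_of_injOn]
  intro p _ q _ h
  dsimp only at h
  have h0 : mk3 (2*p.1+1) (2*p.2+1) (2*(n-p.1-p.2)+1) 0
      = mk3 (2*q.1+1) (2*q.2+1) (2*(n-q.1-q.2)+1) 0 := by rw [h]
  have h1 : mk3 (2*p.1+1) (2*p.2+1) (2*(n-p.1-p.2)+1) 1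
      = mk3 (2*q.1+1) (2*q.2+1) (2*(n-q.1-q.2)+1) 1 := by rw [h]
  simp only [mk3_zero, mk3_one] at h0 h1
  exact Prod.ext (by omega) (by omega)

/-! ### finrank of spans of monomial sets -/

lemma finrank_span_monomials (S : Finset (Fin 3 →₀ ℕ)) :
    Module.finrank ℝ (Submodule.span ℝ
      ((fun m => (monomial m 1 : MvPolynomial (Fin 3) ℝ)) '' ↑S)) = S.card := by
  classical
  have hb := (linearIndepOn_id_range_iff (basisMonomials (Fin 3) ℝ).injective).mpr (basisMonomials (Fin 3) ℝ).linearIndependent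
  rw [coe_basisMonomials] at hb
  have hsub : ((S.image (fun m => (monomial m 1 : MvPolynomial (Fin 3) ℝ))) : Set (MvPolynomial (Fin 3) ℝ))
      ⊆ Set.range (fun m : Fin 3 →₀ ℕ => (monomial m 1 : MvPolynomial (Fin 3) ℝ)) := by
    intro x hx
    rw [Finset.coe_image] at hx
    obtain ⟨m, _, rfl⟩ := hx
    exact ⟨m, rfl⟩
  have hli := hb.mono hsub
  rw [← Finset.coe_image, finrank_span_set_eq_card hli, Finset.toFinset_coe,
    Finset.card_image_of_injective _ (monomial_left_injective one_ne_zero)]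

/-! ### Laplacian on monomials -/

lemma polyLap_monomial (m : Fin 3 →₀ ℕ) (c : ℝ) :
    polyLap (monomial m c) = ∑ j : Fin 3,
      monomial (m - Finsupp.single j 2) (c * (m j) * ((m j - 1 : ℕ) : ℝ)) := by
  rw [polyLap, LinearMap.sum_apply]
  apply Finset.sum_congr rfl
  intro j _
  rw [LinearMap.comp_apply]
  show (pderiv j) ((pderiv j) ((monomial m) c)) = _
  rw [pderiv_monomial, pderiv_monomial]
  congr 1
  · rw [tsub_tsub, ← Finsupp.single_add]
  · rw [Finsupp.tsub_apply, Finsupp.single_eq_same]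

lemma OS_sub {d : ℕ} {m : Fin 3 →₀ ℕ} (hm : m ∈ OS d) {j : Fin 3} (hj : 3 ≤ m j) :
    (m - Finsupp.single j 2) ∈ OS (d - 2) := by
  have happ : ∀ k : Fin 3, ((m - Finsupp.single j 2 : Fin 3 →₀ ℕ)) k = m k - (if j = k then 2 else 0) := by
    intro k
    rw [Finsupp.tsub_apply, Finsupp.single_apply]
  constructor
  · intro k
    rw [happ]
    by_cases h : j = k
    · subst h
      rw [if_pos rfl]
      obtain ⟨r, hr⟩ := hm.1 j
      exact ⟨r - 1, by omega⟩
    · rw [if_neg h]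
      simpa using hm.1 k
  · have hd := hm.2
    rw [degree3] at hd ⊢
    rw [happ 0, happ 1, happ 2]
    fin_cases j <;> simp_all <;> omega


lemma surj_step (i : ℕ) (hi : 1 ≤ i) :
    ∀ t : ℕ, ∀ m ∈ OS (2*i-1), 2*i-1 - (m 0) ≤ t →
      ∃ v ∈ Submodule.span ℝ (gens (2*i+1)), polyLap v = (monomial m 1 : MvPolynomial (Fin 3) ℝ) := by
  intro t
  induction t with
  | zero =>
    intro m hm hle
    exfalso
    obtain ⟨a, ha⟩ := hm.1 0
    obtain ⟨b, hb⟩ := hm.1 1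
    obtain ⟨c, hc⟩ := hm.1 2
    have hd := hm.2
    rw [degree3, ha, hb, hc] at hd
    omega
  | succ t ih =>
    intro m hm hle
    by_cases hcase : 2*i-1 - (m 0) ≤ t
    · exact ih m hm hcase
    set M := m + Finsupp.single 0 2 with hMdef
    have hMk : ∀ k : Fin 3, M k = m k + (if (0:Fin 3) = k then 2 else 0) := by
      intro k
      rw [hMdef, Finsupp.add_apply, Finsupp.single_apply]
    have hM0 : M 0 = m 0 + 2 := by rw [hMk, if_pos rfl]
    have hMOS : M ∈ OS (2*i+1) := by
      constructor
      · intro k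
        rw [hMk]
        by_cases h0 : (0:Fin 3) = k
        · rw [if_pos h0]
          obtain ⟨r, hr⟩ := hm.1 k
          exact ⟨r+1, by omega⟩
        · rw [if_neg h0, add_zero]
          exact hm.1 k
      · have hd := hm.2
        rw [degree3] at hd ⊢
        rw [hMk 0, hMk 1, hMk 2]
        rw [if_pos rfl, if_neg (by decide : ¬((0:Fin 3) = 1)), if_neg (by decide : ¬((0:Fin 3) = 2))]
        omega
    have hMmem : (monomial M 1 : MvPolynomial (Fin 3) ℝ) ∈ Submodule.span ℝ (gens (2*i+1)) :=
      Submodule.subset_span ⟨M, hMOS, rfl⟩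
    have hterm : ∀ j : Fin 3, (0:Fin 3) ≠ j → ∃ v ∈ Submodule.span ℝ (gens (2*i+1)),
        polyLap v = (monomial (M - Finsupp.single j 2)
          ((1:ℝ) * (M j) * ((M j - 1 : ℕ) : ℝ)) : MvPolynomial (Fin 3) ℝ) := by
      intro j hj
      have hMj : M j = m j := by rw [hMk, if_neg hj, add_zero]
      by_cases hb1 : m j = 1
      · refine ⟨0, Submodule.zero_mem _, ?_⟩
        rw [map_zero, hMj, hb1]
        norm_num
      · have h3 : 3 ≤ M j := by
          rw [hMj]
          obtain ⟨r, hr⟩ := hm.1 j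
          omega
        have hm' : (M - Finsupp.single j 2) ∈ OS (2*i-1) := by
          have h' := OS_sub hMOS h3
          have he : 2*i+1-2 = 2*i-1 := by omega
          rwa [he] at h'
        have hm'0 : ((M - Finsupp.single j 2 : Fin 3 →₀ ℕ)) 0 = m 0 + 2 := by
          rw [Finsupp.tsub_apply, Finsupp.single_apply, if_neg (fun h => hj h.symm), hM0]
          omega
        obtain ⟨v', hv', hΔ⟩ := ih (M - Finsupp.single j 2) hm' (by omega)
        refine ⟨((1:ℝ) * (M j) * ((M j - 1:ℕ):ℝ)) • v', Submodule.smul_mem _ _ hv', ?_⟩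
        rw [map_smul, hΔ, smul_monomial, smul_eq_mul, mul_one]
    obtain ⟨v1, hv1, hΔ1⟩ := hterm 1 (by decide)
    obtain ⟨v2, hv2, hΔ2⟩ := hterm 2 (by decide)
    have hcne : ((1:ℝ) * (M 0) * ((M 0 - 1:ℕ):ℝ)) ≠ 0 := by
      rw [hM0]
      have e1 : m 0 + 2 - 1 = m 0 + 1 := by omega
      rw [e1]
      push_cast
      positivity
    refine ⟨((1:ℝ) * (M 0) * ((M 0 - 1:ℕ):ℝ))⁻¹ • ((monomial M 1 : MvPolynomial (Fin 3) ℝ) - v1 - v2),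
      Submodule.smul_mem _ _ (Submodule.sub_mem _ (Submodule.sub_mem _ hMmem hv1) hv2), ?_⟩
    rw [map_smul, map_sub, map_sub, hΔ1, hΔ2, polyLap_monomial, Fin.sum_univ_three]
    have hexp : M - Finsupp.single 0 2 = m := by
      rw [hMdef]
      exact add_tsub_cancel_right m _
    rw [hexp]
    have hT0 : (monomial m ((1:ℝ) * (M 0) * ((M 0 - 1:ℕ):ℝ)) : MvPolynomial (Fin 3) ℝ)
        = ((1:ℝ) * (M 0) * ((M 0 - 1:ℕ):ℝ)) • monomial m 1 := by
      rw [smul_monomial, smul_eq_mul, mul_one]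
    rw [hT0]
    have hab : ((1:ℝ) * (M 0) * ((M 0 - 1:ℕ):ℝ)) • (monomial m 1 : MvPolynomial (Fin 3) ℝ)
        + monomial (M - Finsupp.single 1 2) ((1:ℝ) * (M 1) * ((M 1 - 1:ℕ):ℝ))
        + monomial (M - Finsupp.single 2 2) ((1:ℝ) * (M 2) * ((M 2 - 1:ℕ):ℝ))
        - monomial (M - Finsupp.single 1 2) ((1:ℝ) * (M 1) * ((M 1 - 1:ℕ):ℝ))
        - monomial (M - Finsupp.single 2 2) ((1:ℝ) * (M 2) * ((M 2 - 1:ℕ):ℝ))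
        = ((1:ℝ) * (M 0) * ((M 0 - 1:ℕ):ℝ)) • (monomial m 1 : MvPolynomial (Fin 3) ℝ) := by
      abel
    rw [hab, inv_smul_smul₀ hcne]

end Stmt13Aux


open Stmt13Aux

/-- The space of harmonic polynomials in `ℝ[x,y,z]`, homogeneous of degree `2i+1`,
odd in each of the three variables separately, has dimension `i`. -/
theorem stmt13 (i : ℕ) (hi : 1 ≤ i) :
    Module.finrank ℝ
      ↥(homogeneousSubmodule (Fin 3) ℝ (2 * i + 1) ⊓ LinearMap.ker polyLap ⊓
        LinearMap.ker (oddDefect 0) ⊓ LinearMap.ker (oddDefect 1) ⊓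
        LinearMap.ker (oddDefect 2)) = i := by
  classical
  set V := Submodule.span ℝ (gens (2*i+1)) with hVdef
  set W := Submodule.span ℝ (gens (2*i-1)) with hWdef
  -- V is the span form of the parity/homogeneity constraints
  have hVeq : homogeneousSubmodule (Fin 3) ℝ (2*i+1) ⊓ LinearMap.ker (oddDefect 0) ⊓
      LinearMap.ker (oddDefect 1) ⊓ LinearMap.ker (oddDefect 2) = V := inf_eq_span (2*i+1)
  -- the target submodule is V ⊓ ker polyLap
  have hT : (homogeneousSubmodule (Fin 3) ℝ (2 * i + 1) ⊓ LinearMap.ker polyLap ⊓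
        LinearMap.ker (oddDefect 0) ⊓ LinearMap.ker (oddDefect 1) ⊓
        LinearMap.ker (oddDefect 2)) = V ⊓ LinearMap.ker polyLap := by
    rw [← hVeq]
    ext x
    simp only [Submodule.mem_inf]
    tauto
  -- dimensions of V and W
  have hgensV : gens (2*i+1) = (fun m => (monomial m 1 : MvPolynomial (Fin 3) ℝ)) '' ↑(SF (i-1)) := by
    have e1 : 2*i+1 = 2*(i-1)+3 := by omega
    rw [gens, e1, OS_eq_SF]
  have hfV : Module.finrank ℝ V = (tri (i-1)).card := by
    rw [hVdef, hgensV, finrank_span_monomials, card_SF]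
  have hVfin : FiniteDimensional ℝ V := by
    rw [hVdef, hgensV]
    exact FiniteDimensional.span_of_finite ℝ (((SF (i-1)).finite_toSet).image _)
  -- polyLap maps V into W
  have hmaps : ∀ x ∈ V, polyLap x ∈ W := by
    have hsub : gens (2*i+1) ⊆ ↑(W.comap polyLap) := by
      rintro - ⟨m, hm, rfl⟩
      show polyLap (monomial m 1) ∈ W
      rw [polyLap_monomial]
      apply Submodule.sum_mem
      intro j _
      by_cases h1 : m j = 1
      · rw [h1]
        norm_num
      · have h3 : 3 ≤ m j := by
          obtain ⟨r, hr⟩ := hm.1 j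
          omega
        have hm' : m - Finsupp.single j 2 ∈ OS (2*i-1) := by
          have h' := OS_sub hm h3
          have he : 2*i+1-2 = 2*i-1 := by omega
          rwa [he] at h'
        have : (monomial (m - Finsupp.single j 2) ((1:ℝ) * (m j) * ((m j - 1:ℕ):ℝ))
            : MvPolynomial (Fin 3) ℝ)
            = ((1:ℝ) * (m j) * ((m j - 1:ℕ):ℝ)) • monomial (m - Finsupp.single j 2) 1 := by
          rw [smul_monomial, smul_eq_mul, mul_one]
        rw [this]
        exact Submodule.smul_mem _ _ (Submodule.subset_span ⟨_, hm', rfl⟩)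
    intro x hx
    exact Submodule.span_le.mpr hsub hx
  set f : V →ₗ[ℝ] W := polyLap.restrict hmaps with hfdef
  -- f is surjective
  have hsurj : Function.Surjective f := by
    rintro ⟨w, hw⟩
    have hex : ∃ v ∈ V, polyLap v = w := by
      refine Submodule.span_induction ?_ ?_ ?_ ?_ hw
      · rintro - ⟨m, hm, rfl⟩
        exact surj_step i hi (2*i-1) m hm (by omega)
      · exact ⟨0, Submodule.zero_mem _, map_zero _⟩
      · rintro x y hx hy ⟨v, hv, rfl⟩ ⟨u, hu, rfl⟩
        exact ⟨v + u, Submodule.add_mem _ hv hu, map_add _ _ _⟩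
      · rintro a x hx ⟨v, hv, rfl⟩
        exact ⟨a • v, Submodule.smul_mem _ _ hv, map_smul _ _ _⟩
    obtain ⟨v, hv, hveq⟩ := hex
    refine ⟨⟨v, hv⟩, ?_⟩
    apply Subtype.ext
    simpa [hfdef, LinearMap.restrict_apply] using hveq
  -- rank-nullity
  have hrn := LinearMap.finrank_range_add_finrank_ker f
  have hrange : Module.finrank ℝ ↥(LinearMap.range f) = Module.finrank ℝ W := by
    rw [LinearMap.range_eq_top.mpr hsurj, finrank_top]
  -- the kernel of f has the same dimension as the target submodule
  have hkerf : LinearMap.ker f = (LinearMap.ker polyLap).comap V.subtype :=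
    LinearMap.ker_restrict hmaps
  have hcomap : (V ⊓ LinearMap.ker polyLap).comap V.subtype
      = (LinearMap.ker polyLap).comap V.subtype := by
    rw [Submodule.comap_inf, Submodule.comap_subtype_self, top_inf_eq]
  have hkdim : Module.finrank ℝ ↥(LinearMap.ker f)
      = Module.finrank ℝ ↥(V ⊓ LinearMap.ker polyLap) := by
    rw [hkerf, ← hcomap]
    exact (Submodule.comapSubtypeEquivOfLe
      (inf_le_left : V ⊓ LinearMap.ker polyLap ≤ V)).finrank_eq
  rw [hT, ← hkdim]
  -- dimension counting
  rcases eq_or_lt_of_le hi with h1 | h2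
  · -- i = 1
    have hW0 : W = ⊥ := by
      rw [hWdef, ← h1]
      norm_num [gens, OS_one]
    have hWrank : Module.finrank ℝ W = 0 := by
      rw [hW0]
      exact finrank_bot ℝ _
    have htri : (tri (i-1)).card = 1 := by
      rw [← h1]
      decide
    rw [hrange, hWrank, hfV, htri] at hrn
    omega
  · -- i ≥ 2
    have hgensW : gens (2*i-1) = (fun m => (monomial m 1 : MvPolynomial (Fin 3) ℝ)) '' ↑(SF (i-2)) := by
      have e2 : 2*i-1 = 2*(i-2)+3 := by omega
      rw [gens, e2, OS_eq_SF]
    have hfW : Module.finrank ℝ W = (tri (i-2)).card := by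
      rw [hWdef, hgensW, finrank_span_monomials, card_SF]
    have hcard : (tri (i-1)).card = (tri (i-2)).card + i := by
      rw [card_tri, card_tri]
      have e3 : (i-1)+1 = ((i-2)+1)+1 := by omega
      rw [e3, Finset.sum_range_succ]
      omega
    rw [hrange, hfW, hfV, hcard] at hrn
    omega
end
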